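/- Let D_1,…,D_μ ⊆ ℝⁿ be pairwise disjoint finite sets with D = D_1 ∪ … ∪ D_μ and |D| = ν. Then for every m ≥ ν(n+1) there exist shared hidden-layer parameters w_1,…,w_m ∈ ℝⁿ, b_1,…,b_m ∈ ℝ and, for each i ∈ {1,…,μ}, output parameters α^{(i)} ∈ ℝ^m and β_i ∈ ℝ such that the i-th output unit's value σ(Σ_{j=1}^m α^{(i)}_j σ(w_jᵀx + b_j) + β_i) is strictly positive for every x ∈ D_i and equals 0 for every x ∈ D \ D_i; i.e. the network classifies the μ categories. -/

import Mathlib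

open Matrix Polynomial in
theorem exists_inj_functional {n : ℕ} (S : Set (Fin n → ℝ)) (hS : S.Finite) :
    ∃ u : Fin n → ℝ, Set.InjOn (fun p => u ⬝ᵥ p) S := by
  classical
  set P : (Fin n → ℝ) → (Fin n → ℝ) → ℝ[X] :=
    fun p q => ∑ i : Fin n, C (p i - q i) * X ^ (i.val + 1) with hP
  have hPne : ∀ p q, p ≠ q → P p q ≠ 0 := by
    intro p q hpq h0
    obtain ⟨i0, hi0⟩ : ∃ i, p i ≠ q i := by
      by_contra h; push_neg at h; exact hpq (funext h)
    have hc : (P p q).coeff (i0.val + 1) = p i0 - q i0 := by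
      rw [hP]
      rw [finset_sum_coeff]
      simp only [coeff_C_mul, coeff_X_pow]
      rw [Finset.sum_eq_single i0]
      · simp
      · intro b _ hb
        have : ¬ (i0.val + 1 = b.val + 1) :=
          fun h => hb (Fin.ext (Nat.succ_injective h)).symm
        simp [this]
        intro h; exact absurd (Fin.ext h).symm hb
      · simp
    rw [h0] at hc
    simp at hc
    exact hi0 (by linarith [sub_eq_zero.mp hc.symm] )
  have hbad : (⋃ p ∈ S, ⋃ q ∈ S, {c : ℝ | p ≠ q ∧ (P p q).IsRoot c}).Finite := by
    refine Set.Finite.biUnion hS fun p _ => Set.Finite.biUnion hS fun q _ => ?_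
    by_cases hpq : p = q
    · simp [hpq]
    · exact Set.Finite.subset (Polynomial.finite_setOf_isRoot (hPne p q hpq))
        (fun c hc => hc.2)
  obtain ⟨c, hc⟩ := (Set.Finite.infinite_compl hbad).nonempty
  refine ⟨fun i => c ^ (i.val + 1), ?_⟩
  intro p hp q hq hpq
  by_contra hne
  apply hc
  refine Set.mem_biUnion hp (Set.mem_biUnion hq ⟨hne, ?_⟩)
  have : (P p q).eval c = (fun p => (fun i => c ^ (i.val + 1)) ⬝ᵥ p) p -
      (fun p => (fun i => c ^ (i.val + 1)) ⬝ᵥ p) q := by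
    simp [hP, eval_finset_sum, dotProduct, Finset.sum_sub_distrib, sub_mul, mul_comm]
  unfold IsRoot
  rw [this, hpq, sub_self]


open Matrix in
/-- A three-layer ReLU network with a shared hidden layer of
`m ≥ ν(n+1)` units and `μ` ReLU output units can classify any `μ`-category data set
`D = D₁ ∪ … ∪ D_μ` of total cardinality `ν`: the `i`-th output is strictly positive
on `D i` and zero on the other categories. -/
theorem stmt_11 (n μ ν : ℕ) (D : Fin μ → Set (Fin n → ℝ))
    (hfin : ∀ i, (D i).Finite)
    (hdisj : ∀ i j, i ≠ j → Disjoint (D i) (D j))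
    (hcard : (⋃ i, D i).ncard = ν)
    (m : ℕ) (hm : ν * (n + 1) ≤ m) :
    ∃ (w : Fin m → Fin n → ℝ) (b : Fin m → ℝ) (α : Fin μ → Fin m → ℝ) (β : Fin μ → ℝ),
      ∀ i : Fin μ,
        (∀ x ∈ D i, 0 < max 0 (∑ j, α i j * max 0 (w j ⬝ᵥ x + b j) + β i)) ∧
        (∀ x ∈ (⋃ i', D i') \ D i,
          max 0 (∑ j, α i j * max 0 (w j ⬝ᵥ x + b j) + β i) = 0) := by
  classical
  set S : Set (Fin n → ℝ) := ⋃ i, D i with hSdef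
  have hS : S.Finite := Set.finite_iUnion hfin
  obtain ⟨u, hu⟩ := exists_inj_functional S hS
  set φ : (Fin n → ℝ) → ℝ := fun p => u ⬝ᵥ p with hφdef
  set Sf : Finset (Fin n → ℝ) := hS.toFinset with hSf
  have hSfS : (Sf : Set (Fin n → ℝ)) = S := hS.coe_toFinset
  have hSfcard : Sf.card = ν := by
    rw [← hcard, Set.ncard_eq_toFinset_card _ hS]
  set V : Finset ℝ := Sf.image φ with hV
  have hVcard : V.card = ν := by
    rw [hV, Finset.card_image_of_injOn (by rw [hSfS]; exact hu), hSfcard]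
  set o := V.orderIsoOfFin hVcard with ho
  set s : Fin ν → ℝ := fun k => (o k : ℝ) with hs
  have hsmono : StrictMono s := fun a b hab => by
    exact_mod_cast o.strictMono hab
  -- minimal gap
  set G : Finset ℝ := Finset.image (fun z : Fin ν × Fin ν => s z.2 - s z.1)
      ((Finset.univ : Finset (Fin ν × Fin ν)).filter (fun z => z.1 < z.2)) with hG
  set ε : ℝ := if h : G.Nonempty then G.min' h else 1 with hε
  have hεpos : 0 < ε := by
    rw [hε]
    split
    · next h =>
      obtain ⟨z, hz, hz2⟩ := Finset.mem_image.mp (G.min'_mem h)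
      rw [← hz2]
      exact sub_pos.mpr (hsmono (Finset.mem_filter.mp hz).2)
    · norm_num
  have hεle : ∀ q p : Fin ν, q < p → ε ≤ s p - s q := by
    intro q p hqp
    have hmem : s p - s q ∈ G := Finset.mem_image.mpr
      ⟨(q, p), Finset.mem_filter.mpr ⟨Finset.mem_univ _, hqp⟩, rfl⟩
    rw [hε]
    rw [dif_pos ⟨_, hmem⟩]
    exact Finset.min'_le _ _ hmem
  -- points corresponding to sorted values
  have hpt : ∀ k : Fin ν, ∃ p ∈ Sf, φ p = s k := by
    intro k
    have : s k ∈ V := by rw [hs]; exact (o k).2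
    exact Finset.mem_image.mp this
  choose pt hptS hptφ using hpt
  -- index of a data point
  have hφmem : ∀ x ∈ S, φ x ∈ V := by
    intro x hx
    exact Finset.mem_image_of_mem φ (by rwa [← hSfS] at hx)
  set kx : ∀ x ∈ S, Fin ν := fun x hx => o.symm ⟨φ x, hφmem x hx⟩ with hkx
  have hskx : ∀ x (hx : x ∈ S), s (kx x hx) = φ x := by
    intro x hx
    rw [hs]
    show ((o (o.symm ⟨φ x, hφmem x hx⟩)) : ℝ) = φ x
    rw [o.apply_symm_apply]
  have hptkx : ∀ x (hx : x ∈ S), pt (kx x hx) = x := by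
    intro x hx
    apply hu
    · rw [← hSfS]; exact hptS _
    · exact hx
    · rw [hptφ, hskx x hx]
  -- the matrix
  set M : Matrix (Fin ν) (Fin ν) ℝ := Matrix.of fun q p => max 0 (s q - s p + ε) with hM
  have hMzero : ∀ q p : Fin ν, q < p → M q p = 0 := by
    intro q p hqp
    have := hεle q p hqp
    simp only [hM, Matrix.of_apply]
    rw [max_eq_left (by linarith)]
  have hMdiag : ∀ p : Fin ν, M p p = ε := by
    intro p
    simp only [hM, Matrix.of_apply, sub_self, zero_add]
    exact max_eq_right hεpos.le
  have hdet : IsUnit M.det := by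
    have htri : Mᵀ.BlockTriangular id := by
      intro i j hij
      exact hMzero j i hij
    have : M.det = ε ^ ν := by
      rw [← Matrix.det_transpose, Matrix.det_of_upperTriangular htri]
      simp only [Matrix.transpose_apply]
      rw [Finset.prod_congr rfl (fun p _ => hMdiag p), Finset.prod_const,
        Finset.card_univ, Fintype.card_fin]
    rw [this]
    exact (pow_ne_zero ν hεpos.ne').isUnit
  -- targets and solution
  set tgt : Fin μ → Fin ν → ℝ := fun i q => if pt q ∈ D i then 1 else 0 with htgt
  set αv : Fin μ → Fin ν → ℝ := fun i => M⁻¹ *ᵥ tgt i with hαv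
  have hMαv : ∀ i, M *ᵥ αv i = tgt i := by
    intro i
    rw [hαv]
    rw [Matrix.mulVec_mulVec, Matrix.mul_nonsing_inv _ hdet, Matrix.one_mulVec]
  have hνm : ν ≤ m := le_trans (Nat.le_mul_of_pos_right ν (Nat.succ_pos n)) hm
  -- the network
  refine ⟨fun j => if j.val < ν then u else 0,
          fun j => if h : j.val < ν then ε - s ⟨j.val, h⟩ else 0,
          fun i j => if h : j.val < ν then αv i ⟨j.val, h⟩ else 0,
          fun _ => 0, ?_⟩
  have key : ∀ i : Fin μ, ∀ x, ∀ hx : x ∈ S,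
      (∑ j : Fin m, (if h : j.val < ν then αv i ⟨j.val, h⟩ else 0) *
        max 0 ((if j.val < ν then u else 0) ⬝ᵥ x +
          (if h : j.val < ν then ε - s ⟨j.val, h⟩ else 0))) = tgt i (kx x hx) := by
    intro i x hx
    have h1 : (∑ j : Fin m, (if h : j.val < ν then αv i ⟨j.val, h⟩ else 0) *
        max 0 ((if j.val < ν then u else 0) ⬝ᵥ x +
          (if h : j.val < ν then ε - s ⟨j.val, h⟩ else 0)))
        = ∑ p : Fin ν, αv i p * M (kx x hx) p := by
      rw [← Finset.sum_subset (Finset.subset_univ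
        ((Finset.univ : Finset (Fin ν)).map (Fin.castLEEmb hνm)))]
      · rw [Finset.sum_map]
        refine Finset.sum_congr rfl fun p _ => ?_
        have hp : (Fin.castLEEmb hνm p).val < ν := p.isLt
        rw [dif_pos hp, if_pos hp, dif_pos hp]
        have hpe : (⟨(Fin.castLEEmb hνm p).val, hp⟩ : Fin ν) = p := by
          apply Fin.ext; rfl
        rw [hpe]
        congr 1
        simp only [hM, Matrix.of_apply]
        rw [hskx x hx]
        simp only [hφdef]
        ring_nf
      · intro j _ hj
        have : ¬ j.val < ν := by
          intro hlt
          exact hj (Finset.mem_map.mpr ⟨⟨j.val, hlt⟩, Finset.mem_univ _, Fin.ext rfl⟩)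
        rw [dif_neg this, zero_mul]
    rw [h1, ← hMαv i]
    rw [Matrix.mulVec]
    simp [dotProduct, mul_comm]
  intro i
  constructor
  · intro x hx
    have hxS : x ∈ S := Set.mem_iUnion.mpr ⟨i, hx⟩
    simp only [add_zero]
    rw [key i x hxS]
    have : tgt i (kx x hxS) = 1 := by
      rw [htgt]
      simp only
      rw [if_pos (by rw [hptkx x hxS]; exact hx)]
    rw [this]
    norm_num
  · intro x hx
    have hxS : x ∈ S := hx.1
    simp only [add_zero]
    rw [key i x hxS]
    have : tgt i (kx x hxS) = 0 := by
      rw [htgt]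
      simp only
      rw [if_neg (by rw [hptkx x hxS]; exact hx.2)]
    rw [this]
    norm_num
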